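/- For every n-dimensional lattice Λ and every ε > 0, there exists a vector s ∈ N^{n+1} \ {0} such that the lattice Λ' = {z ∈ Z^{n+1} : ⟨z,s⟩ = 0} has a Gram matrix which, after rescaling by a positive real constant, is within ε of a given Gram matrix of Λ (entrywise). -/

import Mathlib

set_option maxHeartbeats 1000000

open Matrix Finset

lemma stmt12_core (n : ℕ) (w : Fin n → Fin (n + 1) → ℤ)
    (hdet : (Matrix.of (Fin.cons (Pi.single 0 1) w) :
      Matrix (Fin (n + 1)) (Fin (n + 1)) ℤ).det = 1) :
    ∃ s : Fin (n + 1) → ℕ, s ≠ 0 ∧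
      ∃ (K : Submodule ℤ (Fin (n + 1) → ℤ))
        (_ : ∀ z : Fin (n + 1) → ℤ, z ∈ K ↔ (∑ i, (s i : ℤ) * z i) = 0)
        (b : Module.Basis (Fin n) ℤ K),
        ∀ i j : Fin n,
          (∑ k, ((b i : Fin (n + 1) → ℤ) k) * ((b j : Fin (n + 1) → ℤ) k))
            = ∑ k, w i k * w j k := by
  set A : Matrix (Fin (n + 1)) (Fin (n + 1)) ℤ :=
    Matrix.of (Fin.cons (Pi.single 0 1) w) with hAdef
  have hA0 : A 0 = Pi.single 0 1 := rfl
  have hAs : ∀ i : Fin n, A i.succ = w i := fun i => rfl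
  set t : Fin (n + 1) → ℤ := fun c => A.adjugate c 0 with htdef
  have ht0 : t 0 = 1 := by
    have h1 : A.updateRow 0 (Pi.single 0 1) = A := by
      rw [← hA0, Matrix.updateRow_eq_self]
    rw [htdef]
    simp only [Matrix.adjugate_apply, h1, hdet]
  have hAdj : ∀ r, (∑ c, A r c * t c) = if r = 0 then 1 else 0 := by
    intro r
    have := congrFun (congrFun (Matrix.mul_adjugate A) r) 0
    simpa [Matrix.mul_apply, Matrix.one_apply, hdet] using this
  have hwt : ∀ i : Fin n, (∑ c, w i c * t c) = 0 := by
    intro i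
    have := hAdj i.succ
    simpa [hAs, Fin.succ_ne_zero] using this
  set σ : Fin (n + 1) → ℤ := fun c => if t c < 0 then -1 else 1 with hσdef
  have hσσ : ∀ c, σ c * σ c = 1 := by
    intro c; by_cases h : t c < 0 <;> simp [hσdef, h]
  refine ⟨fun c => (t c).natAbs, ?_, ?_⟩
  · intro h
    have := congrFun h 0
    simp [ht0] at this
  have hs : ∀ c, ((t c).natAbs : ℤ) = σ c * t c := by
    intro c
    rw [Int.natCast_natAbs]
    by_cases h : t c < 0
    · simp [hσdef, h, abs_of_neg h]
    · simp [hσdef, h, abs_of_nonneg (not_lt.mp h)]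
  -- the linear functional
  set φ : (Fin (n + 1) → ℤ) →ₗ[ℤ] ℤ :=
    { toFun := fun z => ∑ c, ((t c).natAbs : ℤ) * z c
      map_add' := by
        intro x y
        simp [mul_add, Finset.sum_add_distrib]
      map_smul' := by
        intro r x
        simp [Finset.mul_sum, smul_eq_mul]
        congr 1; funext c; ring } with hφdef
  refine ⟨LinearMap.ker φ, fun z => Iff.rfl, ?_⟩
  set w' : Fin n → Fin (n + 1) → ℤ := fun i c => σ c * w i c with hw'def
  have hterm : ∀ (z : Fin n → Fin (n+1) → ℤ) (i : Fin n) (c : Fin (n + 1)),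
      ((t c).natAbs : ℤ) * (σ c * z i c) = t c * z i c := by
    intro z i c
    rw [hs c]
    calc σ c * t c * (σ c * z i c) = (σ c * σ c) * (t c * z i c) := by ring
    _ = t c * z i c := by rw [hσσ]; ring
  have hw'K : ∀ i, w' i ∈ LinearMap.ker φ := by
    intro i
    simp only [LinearMap.mem_ker, hφdef, LinearMap.coe_mk, AddHom.coe_mk]
    calc (∑ c, ((t c).natAbs : ℤ) * w' i c) = ∑ c, t c * w i c := by
          refine Finset.sum_congr rfl fun c _ => ?_
          exact hterm w i c
    _ = ∑ c, w i c * t c := by simp [mul_comm]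
    _ = 0 := hwt i
  set v : Fin n → LinearMap.ker φ := fun i => ⟨w' i, hw'K i⟩ with hvdef
  -- a key cancellation: recovering coefficients via the adjugate
  have hcancel : ∀ x : Fin (n + 1) → ℤ, Matrix.vecMul x A = 0 → x = 0 := by
    intro x hx
    have h2 : Matrix.vecMul (Matrix.vecMul x A) A.adjugate
        = Matrix.vecMul x (A * A.adjugate) := by
      rw [Matrix.vecMul_vecMul]
    rw [hx, Matrix.zero_vecMul, Matrix.mul_adjugate, hdet] at h2
    simpa using h2.symm
  have hliw : LinearIndependent ℤ w' := by
    rw [Fintype.linearIndependent_iff]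
    intro g hg
    have hgw : ∀ c, (∑ i, g i * w i c) = 0 := by
      intro c
      have h1 := congrFun hg c
      simp only [Finset.sum_apply, Pi.smul_apply, smul_eq_mul, Pi.zero_apply, hw'def] at h1
      have h2 : σ c * ∑ i, g i * w i c = 0 := by
        rw [Finset.mul_sum]
        rw [← h1]
        exact Finset.sum_congr rfl fun i _ => by ring
      have h3 := congrArg (fun y => σ c * y) h2
      simpa [← mul_assoc, hσσ c] using h3
    set x : Fin (n + 1) → ℤ := Fin.cons 0 g with hxdef
    have hx : Matrix.vecMul x A = 0 := by
      funext c
      simp only [Matrix.vecMul, dotProduct, Pi.zero_apply]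
      rw [Fin.sum_univ_succ]
      simp only [hxdef, Fin.cons_zero, Fin.cons_succ, zero_mul, zero_add]
      simpa [hAs] using hgw c
    have := hcancel x hx
    intro i
    have := congrFun this i.succ
    simpa [hxdef] using this
  have hli : LinearIndependent ℤ v := by
    apply LinearIndependent.of_comp (LinearMap.ker φ).subtype
    exact hliw
  have hspan : ⊤ ≤ Submodule.span ℤ (Set.range v) := by
    rintro ⟨z, hz⟩ -
    rw [LinearMap.mem_ker, hφdef] at hz
    simp only [LinearMap.coe_mk, AddHom.coe_mk] at hz
    set zt : Fin (n + 1) → ℤ := fun c => σ c * z c with hztdef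
    have hzt : (∑ c, zt c * t c) = 0 := by
      rw [← hz]
      refine Finset.sum_congr rfl fun c _ => ?_
      rw [hs c]; ring
    set d : Fin (n + 1) → ℤ := Matrix.vecMul zt A.adjugate with hddef
    have hd : Matrix.vecMul d A = zt := by
      rw [hddef, Matrix.vecMul_vecMul, Matrix.adjugate_mul, hdet]
      simp
    have hd0 : d 0 = 0 := by
      rw [hddef]
      simp only [Matrix.vecMul, dotProduct]
      exact hzt
    have hzrep : ∀ c, z c = ∑ i, d i.succ * w' i c := by
      intro c
      have h1 : zt c = ∑ r, d r * A r c := by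
        rw [← hd]
        simp [Matrix.vecMul, dotProduct]
      rw [Fin.sum_univ_succ, hd0, zero_mul, zero_add] at h1
      have h2 : z c = σ c * zt c := by
        rw [hztdef]
        simp only []
        rw [← mul_assoc, hσσ c, one_mul]
      rw [h2, h1, Finset.mul_sum]
      refine Finset.sum_congr rfl fun i _ => ?_
      simp only [hw'def, hAs]
      ring
    have hmem : (⟨z, hz⟩ : LinearMap.ker φ) = ∑ i, d i.succ • v i := by
      apply Subtype.ext
      push_cast [Submodule.coe_sum]
      funext c
      rw [hzrep c]
      simp [hvdef]
    rw [hmem]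
    exact Submodule.sum_mem _ fun i _ =>
      Submodule.smul_mem _ _ (Submodule.subset_span ⟨i, rfl⟩)
  refine ⟨Module.Basis.mk hli hspan, ?_⟩
  intro i j
  have hb : ∀ i : Fin n, ((Module.Basis.mk hli hspan i : LinearMap.ker φ) : Fin (n + 1) → ℤ)
      = w' i := by
    intro i
    rw [Module.Basis.mk_apply]
  rw [hb i, hb j]
  refine Finset.sum_congr rfl fun c _ => ?_
  simp only [hw'def]
  calc σ c * w i c * (σ c * w j c) = (σ c * σ c) * (w i c * w j c) := by ring
  _ = w i c * w j c := by rw [hσσ c]; ring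

open Matrix Finset

lemma stmt12_psd_diag {k : ℕ} {M : Matrix (Fin (k+1)) (Fin (k+1)) ℝ}
    (hM : M.PosSemidef) (l : Fin (k+1)) : 0 ≤ M l l := by
  exact hM.diag_nonneg

lemma stmt12_chol (k : ℕ) (G : Matrix (Fin (k+1)) (Fin (k+1)) ℝ) (hG : G.PosDef) :
    ∃ L : Matrix (Fin (k+1)) (Fin (k+1)) ℝ, (∀ i j, i < j → L i j = 0) ∧
      ∀ i j, G i j = ∑ l, L i l * L j l := by
  letI lo : LinearOrder (Fin (k+1)) := inferInstance
  letI wf : WellFoundedLT (Fin (k+1)) := inferInstance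
  letI lf : LocallyFiniteOrderBot (Fin (k+1)) := inferInstance
  set LINV : Matrix (Fin (k+1)) (Fin (k+1)) ℝ := @LDL.lowerInv ℝ _ (Fin (k+1)) lo wf lf G _ hG with hLINV
  set d : Fin (k+1) → ℝ := @LDL.diagEntries ℝ _ (Fin (k+1)) lo wf lf G _ hG with hd'
  have ede : (fun a b => LinearOrder.toDecidableEq a b : DecidableEq (Fin (k+1)))
      = instDecidableEqFin (k+1) := by
    funext a b
    exact Subsingleton.elim _ _
  haveI hInv : Invertible LINV := by
    have h := @LDL.invertibleLowerInv ℝ _ (Fin (k+1)) lo wf lf G _ hG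
    rw [ede] at h
    exact h
  haveI hInvH : Invertible LINVᴴ := Matrix.invertibleConjTranspose LINV
  have hu : IsUnit LINV.det := Matrix.isUnit_det_of_invertible LINV
  have huH : IsUnit (LINVᴴ).det := Matrix.isUnit_det_of_invertible LINVᴴ
  have hconj : Matrix.diagonal d = LINV * G * LINVᴴ := by
    have h0 := @LDL.diag_eq_lowerInv_conj ℝ _ (Fin (k+1)) lo wf lf G _ hG
    unfold LDL.diag at h0
    rw [ede] at h0
    exact h0
  set LOW : Matrix (Fin (k+1)) (Fin (k+1)) ℝ := LINV⁻¹ with hLOW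
  have hGD : G = LOW * Matrix.diagonal d * LOWᴴ := by
    rw [hconj, hLOW, Matrix.conjTranspose_nonsing_inv]
    have h1 : LINV⁻¹ * (LINV * G * LINVᴴ) = G * LINVᴴ := by
      rw [← Matrix.mul_assoc, ← Matrix.mul_assoc, Matrix.nonsing_inv_mul _ hu, Matrix.one_mul]
    rw [h1, Matrix.mul_assoc, Matrix.mul_nonsing_inv _ huH, Matrix.mul_one]
  have hd : ∀ l, 0 ≤ d l := by
    intro l
    have hpsd : (LINV * G * LINVᴴ).PosSemidef :=
      hG.posSemidef.mul_mul_conjTranspose_same LINV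
    have h1 : Matrix.diagonal d l l = (LINV * G * LINVᴴ) l l := by rw [hconj]
    rw [Matrix.diagonal_apply_eq] at h1
    rw [h1]
    exact stmt12_psd_diag hpsd l
  have htri : ∀ i j : Fin (k+1), i < j → LOW i j = 0 := by
    have hbt : LINV.BlockTriangular OrderDual.toDual := by
      intro i j hij
      exact @LDL.lowerInv_triangular ℝ _ (Fin (k+1)) lo wf lf G _ hG _ _ hij
    have hbt2 := Matrix.blockTriangular_inv_of_blockTriangular hbt
    intro i j hij
    exact hbt2 hij
  refine ⟨fun i l => LOW i l * Real.sqrt (d l), ?_, ?_⟩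
  · intro i j hij
    dsimp only
    rw [htri i j hij, zero_mul]
  · intro i j
    dsimp only
    calc G i j = ∑ l, LOW i l * (d l * LOW j l) := by
          rw [hGD, Matrix.mul_assoc, Matrix.mul_apply]
          refine Finset.sum_congr rfl fun l _ => ?_
          rw [Matrix.diagonal_mul, Matrix.conjTranspose_apply, star_trivial]
    _ = ∑ l, LOW i l * Real.sqrt (d l) * (LOW j l * Real.sqrt (d l)) := by
          refine Finset.sum_congr rfl fun l _ => ?_
          rw [show LOW i l * Real.sqrt (d l) * (LOW j l * Real.sqrt (d l))
              = LOW i l * ((Real.sqrt (d l) * Real.sqrt (d l)) * LOW j l) from by ring,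
            Real.mul_self_sqrt (hd l)]

theorem stmt12 (n : ℕ) (hn : 1 ≤ n) (G : Matrix (Fin n) (Fin n) ℝ)
    (hG : G.PosDef) (ε : ℝ) (hε : 0 < ε) :
    ∃ s : Fin (n + 1) → ℕ, s ≠ 0 ∧
      ∃ (K : Submodule ℤ (Fin (n + 1) → ℤ))
        (_ : ∀ z : Fin (n + 1) → ℤ, z ∈ K ↔ (∑ i, (s i : ℤ) * z i) = 0)
        (b : Module.Basis (Fin n) ℤ K) (c : ℝ), 0 < c ∧
          ∀ i j : Fin n,
            |c * ((∑ k, ((b i : Fin (n + 1) → ℤ) k) * ((b j : Fin (n + 1) → ℤ) k) : ℤ) : ℝ)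
              - G i j| < ε := by
  obtain ⟨k, rfl⟩ : ∃ k, n = k + 1 := ⟨n - 1, by omega⟩
  obtain ⟨L, hLtri, hGL⟩ := stmt12_chol k G hG
  -- the size bound
  set β : ℝ := (∑ i, ∑ l, |L i l|) + 1 with hβdef
  have hβ1 : 1 ≤ β := by
    have : (0:ℝ) ≤ ∑ i, ∑ l, |L i l| :=
      Finset.sum_nonneg fun _ _ => Finset.sum_nonneg fun _ _ => abs_nonneg _
    simp only [hβdef]; linarith
  have hLb : ∀ i l, |L i l| ≤ β := by
    intro i l
    have h1 : |L i l| ≤ ∑ l', |L i l'| :=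
      Finset.single_le_sum (f := fun l' => |L i l'|) (fun _ _ => abs_nonneg _)
        (Finset.mem_univ l)
    have h2 : (∑ l', |L i l'|) ≤ ∑ i', ∑ l', |L i' l'| :=
      Finset.single_le_sum (f := fun i' => ∑ l', |L i' l'|)
        (fun _ _ => Finset.sum_nonneg fun _ _ => abs_nonneg _) (Finset.mem_univ i)
    simp only [hβdef]; linarith
  set C : ℝ := ((k:ℝ) + 4) * (β + 1) with hCdef
  have hC : 0 < C := by
    have : (0:ℝ) ≤ (k:ℝ) := Nat.cast_nonneg k
    simp only [hCdef]; nlinarith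
  set N : ℕ := ⌈C / ε⌉₊ + 1 with hNdef
  have hN1 : 1 ≤ N := by omega
  have hN0 : (0:ℝ) < (N:ℝ) := by
    have : 0 < N := hN1
    exact_mod_cast this
  have hNC : C / (N:ℝ) < ε := by
    have h1 : C / ε < (N:ℝ) := by
      have h2 : C / ε ≤ (⌈C / ε⌉₊ : ℝ) := Nat.le_ceil _
      have h3 : ((⌈C / ε⌉₊ : ℕ) : ℝ) < (N:ℝ) := by
        rw [hNdef]; push_cast; linarith
      linarith
    rw [div_lt_iff₀ hN0]
    calc C = (C / ε) * ε := by field_simp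
    _ < (N:ℝ) * ε := by
        apply mul_lt_mul_of_pos_right h1 hε
    _ = ε * (N:ℝ) := by ring
  -- the integer data
  set m : Fin (k+1) → Fin (k+1) → ℤ := fun i l => round ((N:ℝ) * L i l) with hmdef
  have hmtri : ∀ i l : Fin (k+1), i < l → m i l = 0 := by
    intro i l h
    simp only [hmdef, hLtri i l h, mul_zero, round_zero]
  set w : Fin (k+1) → Fin (k+2) → ℤ :=
    fun i => (Fin.snoc (m i) (0:ℤ) : Fin (k+2) → ℤ) + Pi.single i.succ (1:ℤ) with hwdef
  have hsnoc0 : ∀ (i : Fin (k+1)) (c : Fin (k+2)), (i:ℕ) < (c:ℕ) →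
      (Fin.snoc (m i) (0:ℤ) : Fin (k+2) → ℤ) c = 0 := by
    intro i c hc
    induction c using Fin.lastCases with
    | last => simp [Fin.snoc_last]
    | cast j =>
        rw [Fin.snoc_castSucc]
        apply hmtri
        rw [Fin.lt_def]
        simpa using hc
  have hdet : (Matrix.of (Fin.cons (Pi.single 0 1) w) :
      Matrix (Fin (k+2)) (Fin (k+2)) ℤ).det = 1 := by
    have htri' : (Matrix.of fun (i j : Fin (k+1)) => w i j.succ).BlockTriangular
        OrderDual.toDual := by
      intro i j hij
      replace hij : i < j := hij
      show w i j.succ = 0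
      rw [hwdef]
      simp only [Pi.add_apply]
      rw [hsnoc0 i j.succ (by
        rw [Fin.val_succ]
        have h2 : (i:ℕ) < (j:ℕ) := hij
        omega)]
      rw [Pi.single_eq_of_ne (by
        intro h
        exact (Fin.ne_of_lt hij) (Fin.succ_injective _ h).symm)]
      ring
    have hdiag1 : (Matrix.of fun (i j : Fin (k+1)) => w i j.succ).det = 1 := by
      rw [Matrix.det_of_lowerTriangular _ htri']
      apply Finset.prod_eq_one
      intro i _
      show w i i.succ = 1
      rw [hwdef]
      simp only [Pi.add_apply]
      rw [hsnoc0 i i.succ (by rw [Fin.val_succ]; omega)]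
      rw [Pi.single_eq_same]
      ring
    rw [Matrix.det_succ_row_zero]
    rw [Finset.sum_eq_single 0]
    · have h00 : (Matrix.of (Fin.cons (Pi.single 0 1) w) :
          Matrix (Fin (k+2)) (Fin (k+2)) ℤ) 0 0 = 1 := by
        simp [Matrix.of_apply, Fin.cons_zero, Pi.single_eq_same]
      have hsub : ((Matrix.of (Fin.cons (Pi.single 0 1) w) :
          Matrix (Fin (k+2)) (Fin (k+2)) ℤ).submatrix Fin.succ ((0:Fin (k+2)).succAbove))
          = Matrix.of (fun (i j : Fin (k+1)) => w i j.succ) := by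
        ext i j
        rw [Matrix.submatrix_apply, Fin.succAbove_zero]
        simp [Matrix.of_apply, Fin.cons_succ]
      rw [h00, hsub, hdiag1]
      simp
    · intro j _ hj
      have h0j : (Matrix.of (Fin.cons (Pi.single 0 1) w) :
          Matrix (Fin (k+2)) (Fin (k+2)) ℤ) 0 j = 0 := by
        simp only [Matrix.of_apply, Fin.cons_zero]
        exact Pi.single_eq_of_ne hj _
      rw [h0j]
      ring
    · intro h
      exact absurd (Finset.mem_univ 0) h
  obtain ⟨s, hs0, K, hK, b, hGram⟩ := stmt12_core (k+1) w hdet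
  refine ⟨s, hs0, K, hK, b, ((N:ℝ)^2)⁻¹, by positivity, ?_⟩
  intro i j
  rw [hGram i j]
  -- decompose the Gram sum
  have hsl : ∀ (f : Fin (k+2) → ℤ) (a : Fin (k+2)), (∑ c, f c * (Pi.single a (1:ℤ) : Fin (k+2) → ℤ) c) = f a := by
    intro f a
    simp [Pi.single_apply, mul_ite, Finset.sum_ite_eq']
  have hsr : ∀ (g : Fin (k+2) → ℤ) (a : Fin (k+2)), (∑ c, (Pi.single a (1:ℤ) : Fin (k+2) → ℤ) c * g c) = g a := by
    intro g a
    simp [Pi.single_apply, ite_mul, Finset.sum_ite_eq']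
  have hsum : (∑ c, w i c * w j c)
      = (∑ l, m i l * m j l) + (Fin.snoc (m i) (0:ℤ) : Fin (k+2) → ℤ) j.succ + (Fin.snoc (m j) (0:ℤ) : Fin (k+2) → ℤ) i.succ
        + (if i = j then 1 else 0) := by
    have e1 : ∀ c, w i c * w j c
        = (Fin.snoc (m i) (0:ℤ) : Fin (k+2) → ℤ) c * (Fin.snoc (m j) (0:ℤ) : Fin (k+2) → ℤ) c
          + (Fin.snoc (m i) (0:ℤ) : Fin (k+2) → ℤ) c * (Pi.single j.succ (1:ℤ) : Fin (k+2) → ℤ) c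
          + (Pi.single i.succ (1:ℤ) : Fin (k+2) → ℤ) c * (Fin.snoc (m j) (0:ℤ) : Fin (k+2) → ℤ) c
          + (Pi.single i.succ (1:ℤ) : Fin (k+2) → ℤ) c * (Pi.single j.succ (1:ℤ) : Fin (k+2) → ℤ) c := by
      intro c
      show ((Fin.snoc (m i) (0:ℤ) : Fin (k+2) → ℤ) c + (Pi.single i.succ (1:ℤ) : Fin (k+2) → ℤ) c)
          * ((Fin.snoc (m j) (0:ℤ) : Fin (k+2) → ℤ) c + (Pi.single j.succ (1:ℤ) : Fin (k+2) → ℤ) c) = _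
      ring
    rw [Finset.sum_congr rfl fun c _ => e1 c]
    rw [Finset.sum_add_distrib, Finset.sum_add_distrib, Finset.sum_add_distrib]
    congr 1
    · congr 1
      · congr 1
        · rw [Fin.sum_univ_castSucc]
          simp only [Fin.snoc_castSucc, Fin.snoc_last, mul_zero, add_zero]
        · exact hsl _ _
      · exact hsr _ _
    · rw [hsr]
      rw [Pi.single_apply]
      by_cases h : i = j
      · subst h; simp
      · rw [if_neg (by
          intro hh
          exact h (Fin.succ_injective _ hh)), if_neg h]
  rw [hsum]
  -- real estimates
  have hround : ∀ (a b' : Fin (k+1)), |((m a b' : ℤ):ℝ) - (N:ℝ) * L a b'| ≤ 1/2 := by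
    intro a b'
    rw [hmdef, abs_sub_comm]
    exact abs_sub_round _
  have hNb : (1:ℝ) ≤ (N:ℝ) := by exact_mod_cast hN1
  have hmb : ∀ (a b' : Fin (k+1)), |((m a b' : ℤ):ℝ)| ≤ (N:ℝ) * β + 1 := by
    intro a b'
    have h1 := hround a b'
    have h2 : |(N:ℝ) * L a b'| ≤ (N:ℝ) * β := by
      rw [abs_mul, abs_of_pos hN0]
      exact mul_le_mul_of_nonneg_left (hLb a b') (le_of_lt hN0)
    have h3 : ((m a b' : ℤ):ℝ) = (((m a b' : ℤ):ℝ) - (N:ℝ) * L a b') + (N:ℝ) * L a b' := by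
      ring
    calc |((m a b' : ℤ):ℝ)|
        = |(((m a b' : ℤ):ℝ) - (N:ℝ) * L a b') + (N:ℝ) * L a b'| := by rw [← h3]
    _ ≤ |((m a b' : ℤ):ℝ) - (N:ℝ) * L a b'| + |(N:ℝ) * L a b'| := abs_add_le _ _
    _ ≤ (N:ℝ) * β + 1 := by linarith
  have hterm : ∀ l, |((m i l : ℤ):ℝ) * ((m j l : ℤ):ℝ) - (N:ℝ)^2 * (L i l * L j l)|
      ≤ (N:ℝ) * β + 1 := by
    intro l
    have e : ((m i l : ℤ):ℝ) * ((m j l : ℤ):ℝ) - (N:ℝ)^2 * (L i l * L j l)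
        = ((m i l : ℤ):ℝ) * (((m j l : ℤ):ℝ) - (N:ℝ) * L j l)
          + ((N:ℝ) * L j l) * (((m i l : ℤ):ℝ) - (N:ℝ) * L i l) := by ring
    rw [e]
    have h1 := hround i l
    have h2 := hround j l
    have h3 := hmb i l
    have h4 : |(N:ℝ) * L j l| ≤ (N:ℝ) * β := by
      rw [abs_mul, abs_of_pos hN0]
      exact mul_le_mul_of_nonneg_left (hLb j l) (le_of_lt hN0)
    calc |((m i l : ℤ):ℝ) * (((m j l : ℤ):ℝ) - (N:ℝ) * L j l)
          + ((N:ℝ) * L j l) * (((m i l : ℤ):ℝ) - (N:ℝ) * L i l)|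
        ≤ |((m i l : ℤ):ℝ)| * |(((m j l : ℤ):ℝ) - (N:ℝ) * L j l)|
          + |(N:ℝ) * L j l| * |(((m i l : ℤ):ℝ) - (N:ℝ) * L i l)| := by
          calc |((m i l : ℤ):ℝ) * (((m j l : ℤ):ℝ) - (N:ℝ) * L j l)
              + ((N:ℝ) * L j l) * (((m i l : ℤ):ℝ) - (N:ℝ) * L i l)|
              ≤ |((m i l : ℤ):ℝ) * (((m j l : ℤ):ℝ) - (N:ℝ) * L j l)|
              + |((N:ℝ) * L j l) * (((m i l : ℤ):ℝ) - (N:ℝ) * L i l)| := abs_add_le _ _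
          _ = _ := by rw [abs_mul, abs_mul]
    _ ≤ ((N:ℝ) * β + 1) * (1/2) + ((N:ℝ) * β) * (1/2) := by
          apply add_le_add
          · apply mul_le_mul h3 h2 (abs_nonneg _) (by positivity)
          · apply mul_le_mul h4 h1 (abs_nonneg _) (by positivity)
    _ ≤ (N:ℝ) * β + 1 := by nlinarith [hN0, hβ1]
  have hNβpos : (0:ℝ) ≤ (N:ℝ) * β := by nlinarith
  have hsnocb : ∀ (a : Fin (k+1)) (cc : Fin (k+2)), |(((Fin.snoc (m a) (0:ℤ) : Fin (k+2) → ℤ) cc : ℤ):ℝ)|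
      ≤ (N:ℝ) * β + 1 := by
    intro a cc
    induction cc using Fin.lastCases with
    | last =>
        rw [Fin.snoc_last]
        simp only [Int.cast_zero, abs_zero]
        linarith
    | cast j => rw [Fin.snoc_castSucc]; exact hmb a j
  have hs1 : |(∑ l, ((m i l : ℤ):ℝ) * ((m j l : ℤ):ℝ)) - ∑ l, (N:ℝ)^2 * (L i l * L j l)|
      ≤ ((k:ℝ)+1) * ((N:ℝ) * β + 1) := by
    rw [← Finset.sum_sub_distrib]
    calc |∑ l, (((m i l : ℤ):ℝ) * ((m j l : ℤ):ℝ) - (N:ℝ)^2 * (L i l * L j l))|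
        ≤ ∑ l, |((m i l : ℤ):ℝ) * ((m j l : ℤ):ℝ) - (N:ℝ)^2 * (L i l * L j l)| :=
          Finset.abs_sum_le_sum_abs _ _
    _ ≤ ∑ _l : Fin (k+1), ((N:ℝ) * β + 1) := Finset.sum_le_sum fun l _ => hterm l
    _ = ((k:ℝ)+1) * ((N:ℝ) * β + 1) := by
          rw [Finset.sum_const, Finset.card_univ]
          simp [nsmul_eq_mul]
          push_cast
          ring
  have hs2 := hsnocb i j.succ
  have hs3 := hsnocb j i.succ
  have hs4 : |(((if i = j then (1:ℤ) else 0) : ℤ):ℝ)| ≤ 1 := by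
    by_cases h : i = j <;> simp [h]
  have hfin : |(∑ l, ((m i l : ℤ):ℝ) * ((m j l : ℤ):ℝ))
        + (((Fin.snoc (m i) (0:ℤ) : Fin (k+2) → ℤ) j.succ : ℤ):ℝ) + (((Fin.snoc (m j) (0:ℤ) : Fin (k+2) → ℤ) i.succ : ℤ):ℝ)
        + (((if i = j then (1:ℤ) else 0) : ℤ):ℝ) - ∑ l, (N:ℝ)^2 * (L i l * L j l)|
      ≤ ((k:ℝ)+3) * ((N:ℝ)*β+1) + 1 := by
    set x := ∑ l, ((m i l : ℤ):ℝ) * ((m j l : ℤ):ℝ) with hx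
    set v := ∑ l, (N:ℝ)^2 * (L i l * L j l) with hv
    set y := (((Fin.snoc (m i) (0:ℤ) : Fin (k+2) → ℤ) j.succ : ℤ):ℝ) with hy
    set z := (((Fin.snoc (m j) (0:ℤ) : Fin (k+2) → ℤ) i.succ : ℤ):ℝ) with hz
    set u := (((if i = j then (1:ℤ) else 0) : ℤ):ℝ) with hu
    have e : x + y + z + u - v = ((x - v) + y) + z + u := by ring
    rw [e]
    calc |(x - v) + y + z + u| ≤ |(x - v) + y + z| + |u| := abs_add_le _ _
    _ ≤ |(x - v) + y| + |z| + |u| := by have := abs_add_le ((x-v)+y) z; linarith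
    _ ≤ |x - v| + |y| + |z| + |u| := by have := abs_add_le (x-v) y; linarith
    _ ≤ ((k:ℝ)+1) * ((N:ℝ)*β+1) + ((N:ℝ)*β+1) + ((N:ℝ)*β+1) + 1 := by
          have := hs1; have := hs2; have := hs3; have := hs4
          linarith
    _ = ((k:ℝ)+3) * ((N:ℝ)*β+1) + 1 := by ring
  have hle : ((k:ℝ)+3) * ((N:ℝ)*β+1) + 1 ≤ C * (N:ℝ) := by
    have h1 : (N:ℝ)*β+1 ≤ (N:ℝ)*(β+1) := by nlinarith
    have h2 : (1:ℝ) ≤ (N:ℝ)*(β+1) := by nlinarith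
    have h3 : (0:ℝ) ≤ (k:ℝ) := Nat.cast_nonneg k
    have h4 := mul_le_mul_of_nonneg_left h1 (by linarith : (0:ℝ) ≤ (k:ℝ)+3)
    calc ((k:ℝ)+3) * ((N:ℝ)*β+1) + 1 ≤ ((k:ℝ)+3) * ((N:ℝ)*(β+1)) + (N:ℝ)*(β+1) := by
          linarith
    _ = C * (N:ℝ) := by rw [hCdef]; ring
  -- assemble
  have ecast : ((((∑ l, m i l * m j l) + (Fin.snoc (m i) (0:ℤ) : Fin (k+2) → ℤ) j.succ + (Fin.snoc (m j) (0:ℤ) : Fin (k+2) → ℤ) i.succ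
        + (if i = j then 1 else 0) : ℤ)):ℝ)
      = (∑ l, ((m i l : ℤ):ℝ) * ((m j l : ℤ):ℝ))
        + (((Fin.snoc (m i) (0:ℤ) : Fin (k+2) → ℤ) j.succ : ℤ):ℝ) + (((Fin.snoc (m j) (0:ℤ) : Fin (k+2) → ℤ) i.succ : ℤ):ℝ)
        + (((if i = j then (1:ℤ) else 0) : ℤ):ℝ) := by
    push_cast
    ring
  rw [ecast]
  have hG' : (N:ℝ)^2 * G i j = ∑ l, (N:ℝ)^2 * (L i l * L j l) := by
    rw [hGL i j, Finset.mul_sum]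
  have hc2 : ((N:ℝ)^2)⁻¹ * ((N:ℝ)^2) = 1 := by
    apply inv_mul_cancel₀
    positivity
  set Y : ℝ := (∑ l, ((m i l : ℤ):ℝ) * ((m j l : ℤ):ℝ))
      + (((Fin.snoc (m i) (0:ℤ) : Fin (k+2) → ℤ) j.succ : ℤ):ℝ) + (((Fin.snoc (m j) (0:ℤ) : Fin (k+2) → ℤ) i.succ : ℤ):ℝ)
      + (((if i = j then (1:ℤ) else 0) : ℤ):ℝ) with hY
  have e2 : ((N:ℝ)^2)⁻¹ * Y - G i j = ((N:ℝ)^2)⁻¹ * (Y - (N:ℝ)^2 * G i j) := by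
    rw [mul_sub, ← mul_assoc, hc2, one_mul]
  rw [e2, abs_mul, abs_of_pos (by positivity : (0:ℝ) < ((N:ℝ)^2)⁻¹)]
  have hXb : |Y - (N:ℝ)^2 * G i j| ≤ C * (N:ℝ) := by
    rw [hG']
    exact le_trans hfin hle
  calc ((N:ℝ)^2)⁻¹ * |Y - (N:ℝ)^2 * G i j| ≤ ((N:ℝ)^2)⁻¹ * (C * (N:ℝ)) :=
        mul_le_mul_of_nonneg_left hXb (by positivity)
  _ = C / (N:ℝ) := by
        field_simp
  _ < ε := hNC
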